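/- arXiv:1312.5518 — 2 statements merged into one kernel-verified Lean document; each statement's English description precedes it below -/
import Mathlib

section
/- Let S be a semigroup that is the disjoint union of free monogenic subsemigroups ⟨a⟩ and ⟨b⟩, and suppose ab = a^m and ba = b^n for some m, n ≥ 1. Then m = n = 2. -/
/-- `pw a n` is `a ^ n` for `n ≥ 1` (with junk value `a` at `n = 0`),
defined in any magma. -/
def pw {S : Type*} [Mul S] (a : S) : ℕ → S
  | 0 => a
  | 1 => a
  | n + 2 => pw a (n + 1) * a

/-- The monogenic subsemigroup `⟨a⟩ = {x : ∃ n ≥ 1, pw a n = x}`. -/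
def genSet {S : Type*} [Mul S] (a : S) : Set S := {x | ∃ n, 1 ≤ n ∧ pw a n = x}

/-- `a` has infinite order: its positive powers are pairwise distinct,
i.e. `⟨a⟩` is free monogenic. -/
def InfOrder {S : Type*} [Mul S] (a : S) : Prop :=
  ∀ m n : ℕ, 1 ≤ m → 1 ≤ n → pw a m = pw a n → m = n

lemma pw_succ {S : Type*} [Mul S] (a : S) (k : ℕ) (hk : 1 ≤ k) :
    pw a (k + 1) = pw a k * a := by
  match k, hk with
  | 1, _ => rfl
  | (k + 2), _ => rfl

lemma pw_add {S : Type*} [Semigroup S] (a : S) (p q : ℕ) (hp : 1 ≤ p) (hq : 1 ≤ q) :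
    pw a p * pw a q = pw a (p + q) := by
  induction q with
  | zero => omega
  | succ q ih =>
    rcases Nat.eq_or_lt_of_le hq with h | h
    · have : q = 0 := by omega
      subst this
      show pw a p * a = pw a (p + 1)
      rw [pw_succ a p hp]
    · have hq1 : 1 ≤ q := by omega
      rw [pw_succ a q hq1, ← mul_assoc, ih hq1, ← pw_succ a (p + q) (by omega), Nat.add_assoc]

lemma a_mul_pwb {S : Type*} [Semigroup S] (a b : S) (m : ℕ) (hm : 1 ≤ m)
    (h1 : a * b = pw a m) (k : ℕ) (hk : 1 ≤ k) :
    a * pw b k = pw a (m + (k - 1) * (m - 1)) := by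
  induction k with
  | zero => omega
  | succ k ih =>
    rcases Nat.eq_or_lt_of_le hk with h | h
    · have : k = 0 := by omega
      subst this
      simpa [pw] using h1
    · have hk1 : 1 ≤ k := by omega
      have hj : 1 ≤ m + (k - 1) * (m - 1) := by omega
      rw [pw_succ b k hk1, ← mul_assoc, ih hk1]
      -- pw a j * b = pw a (j + m - 1)
      have step : ∀ j : ℕ, 1 ≤ j → pw a j * b = pw a (j + m - 1) := by
        intro j hj
        induction j with
        | zero => omega
        | succ j ihj =>
          rcases Nat.eq_or_lt_of_le hj with h' | h'
          · simpa [← h', Nat.add_comm, pw] using h1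
          · have hj1 : 1 ≤ j := by omega
            rw [pw_succ a j hj1, mul_assoc, h1, pw_add a j m hj1 hm]
            congr 1
            omega
      rw [step _ hj]
      congr 1
      have hk2 : (k + 1 - 1) * (m - 1) = (k - 1) * (m - 1) + (m - 1) := by
        have h3 : k + 1 - 1 = (k - 1) + 1 := by omega
        rw [h3, Nat.add_mul, one_mul]
      rw [hk2]
      generalize (k - 1) * (m - 1) = t
      omega

/-- In a disjoint union of two free monogenic semigroups ⟨a⟩ ∪ ⟨b⟩,
if `ab = a^m` and `ba = b^n` then `m = n = 2`. -/
theorem stmt_6 {S : Type*} [Semigroup S] (a b : S)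
    (ha : InfOrder a) (hb : InfOrder b)
    (hdisj : genSet a ∩ genSet b = ∅)
    (hcover : genSet a ∪ genSet b = Set.univ)
    (m n : ℕ) (hm : 1 ≤ m) (hn : 1 ≤ n)
    (h1 : a * b = pw a m) (h2 : b * a = pw b n) :
    m = 2 ∧ n = 2 := by
  have e1 : (a * b) * a = pw a (m + 1) := by
    rw [h1, ← pw_succ a m hm]
  have e2 : a * (b * a) = pw a (m + (n - 1) * (m - 1)) := by
    rw [h2, a_mul_pwb a b m hm h1 n hn]
  have key : m + 1 = m + (n - 1) * (m - 1) := by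
    apply ha _ _ (by omega) (by omega)
    rw [← e1, ← e2, mul_assoc]
  have : (n - 1) * (m - 1) = 1 := by omega
  have := Nat.eq_one_of_mul_eq_one_left this
  have := Nat.eq_one_of_mul_eq_one_right ‹(n-1)*(m-1) = 1›
  omega
end

section
/- The semigroup defined by the presentation ⟨a, b | ab = a², ba = b²⟩ is the disjoint union of the free monogenic subsemigroups ⟨a⟩ and ⟨b⟩. -/
section Aux

variable {S : Type*} [Semigroup S] (a b : S)

theorem pw_succ_s8 : ∀ n : ℕ, 1 ≤ n → pw a (n + 1) = pw a n * a
  | _ + 1, _ => rfl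

theorem pw_add_s8 : ∀ m n : ℕ, 1 ≤ m → 1 ≤ n → pw a m * pw a n = pw a (m + n)
  | m, 1, hm, _ => (pw_succ_s8 a m hm).symm
  | m, n + 2, hm, _ => by
    rw [show pw a (n + 2) = pw a (n + 1) * a from rfl, ← mul_assoc,
      pw_add_s8 m (n + 1) hm (by omega), show m + (n + 2) = m + (n + 1) + 1 by omega,
      pw_succ_s8 a (m + (n + 1)) (by omega)]

theorem pw_mul_other (hab : a * b = a * a) :
    ∀ n : ℕ, 1 ≤ n → pw a n * b = pw a (n + 1)
  | 1, _ => by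
    show a * b = pw a 1 * a
    rw [hab]; rfl
  | n + 2, _ => by
    rw [show pw a (n + 2) = pw a (n + 1) * a from rfl, mul_assoc, hab, ← mul_assoc]
    rfl

theorem pw_mul_pw_other (hab : a * b = a * a) :
    ∀ m n : ℕ, 1 ≤ m → 1 ≤ n → pw a m * pw b n = pw a (m + n)
  | m, 1, hm, _ => pw_mul_other a b hab m hm
  | m, n + 2, hm, _ => by
    rw [show pw b (n + 2) = pw b (n + 1) * b from rfl, ← mul_assoc,
      pw_mul_pw_other hab m (n + 1) hm (by omega),
      pw_mul_other a b hab (m + (n + 1)) (by omega)]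
    rfl

theorem map_pw {T : Type*} [Semigroup T] (f : S →ₙ* T) :
    ∀ n : ℕ, 1 ≤ n → f (pw a n) = pw (f a) n
  | 1, _ => rfl
  | n + 2, _ => by
    rw [show pw a (n + 2) = pw a (n + 1) * a from rfl, map_mul,
      map_pw f (n + 1) (by omega)]
    rfl

end Aux

theorem pw_ofAdd : ∀ n : ℕ, 1 ≤ n →
    pw (Multiplicative.ofAdd 1 : Multiplicative ℕ) n = Multiplicative.ofAdd n
  | 1, _ => rfl
  | n + 2, _ => by
    rw [show pw (Multiplicative.ofAdd 1 : Multiplicative ℕ) (n + 2)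
        = pw (Multiplicative.ofAdd 1 : Multiplicative ℕ) (n + 1) * Multiplicative.ofAdd 1
        from rfl,
      pw_ofAdd (n + 1) (by omega)]
    rfl

/-- Left-zero semigroup on two elements, used to track the first letter. -/
def LZ := Fin 2

instance : Semigroup LZ where
  mul x _ := x
  mul_assoc _ _ _ := rfl

theorem pw_LZ (x : LZ) : ∀ n : ℕ, pw x n = x
  | 0 => rfl
  | 1 => rfl
  | n + 2 => pw_LZ x (n + 1)

namespace Stmt8

/-- The generator `a` in the free semigroup on two letters. -/
def A : FreeSemigroup (Fin 2) := FreeSemigroup.of 0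

/-- The generator `b` in the free semigroup on two letters. -/
def B : FreeSemigroup (Fin 2) := FreeSemigroup.of 1

/-- The relations `ab = a²` and `ba = b²`. -/
def rel : FreeSemigroup (Fin 2) → FreeSemigroup (Fin 2) → Prop := fun u v =>
  (u = A * B ∧ v = pw A 2) ∨ (u = B * A ∧ v = pw B 2)

/-- The semigroup defined by the presentation `⟨a, b | ab = a², ba = b²⟩`. -/
def Sem := (conGen rel).Quotient

instance : Semigroup Sem := inferInstanceAs (Semigroup (conGen rel).Quotient)

/-- The image of `a` in the presented semigroup. -/
def a' : Sem := (A : (conGen rel).Quotient)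

/-- The image of `b` in the presented semigroup. -/
def b' : Sem := (B : (conGen rel).Quotient)

/-- Length homomorphism on the free semigroup. -/
def lenHom : FreeSemigroup (Fin 2) →ₙ* Multiplicative ℕ :=
  FreeSemigroup.lift (fun _ => Multiplicative.ofAdd 1)

theorem lenHom_rel : ∀ u v, conGen rel u v → lenHom u = lenHom v := by
  have : conGen rel ≤ Con.ker lenHom := by
    apply Con.conGen_le.mpr
    rintro x y (⟨hx, hy⟩ | ⟨hx, hy⟩) <;> subst hx <;> subst hy <;> rfl
  exact fun u v h => this h

/-- Head homomorphism to the left-zero semigroup. -/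
def hdHom : FreeSemigroup (Fin 2) →ₙ* LZ :=
  FreeSemigroup.lift (id : Fin 2 → LZ)

theorem hdHom_rel : ∀ u v, conGen rel u v → hdHom u = hdHom v := by
  have : conGen rel ≤ Con.ker hdHom := by
    apply Con.conGen_le.mpr
    rintro x y (⟨hx, hy⟩ | ⟨hx, hy⟩) <;> subst hx <;> subst hy <;> rfl
  exact fun u v h => this h

/-- Length homomorphism on the presented semigroup. -/
def lenQ : Sem →ₙ* Multiplicative ℕ where
  toFun := Quotient.lift lenHom (fun u v h => lenHom_rel u v h)
  map_mul' x y := Con.induction_on₂ x y fun u v => map_mul lenHom u v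

/-- Head homomorphism on the presented semigroup. -/
def hdQ : Sem →ₙ* LZ where
  toFun := Quotient.lift hdHom (fun u v h => hdHom_rel u v h)
  map_mul' x y := Con.induction_on₂ x y fun u v => map_mul hdHom u v

theorem lenQ_a : lenQ a' = Multiplicative.ofAdd 1 := rfl
theorem lenQ_b : lenQ b' = Multiplicative.ofAdd 1 := rfl
theorem hdQ_a : hdQ a' = (0 : Fin 2) := rfl
theorem hdQ_b : hdQ b' = (1 : Fin 2) := rfl

theorem infOrder_of_len {x : Sem} (hx : lenQ x = Multiplicative.ofAdd 1) : InfOrder x := by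
  intro m n hm hn h
  have := congrArg lenQ h
  rw [map_pw x lenQ m hm, map_pw x lenQ n hn, hx, pw_ofAdd m hm, pw_ofAdd n hn] at this
  exact Multiplicative.ofAdd.injective this

theorem hab : a' * b' = a' * a' := by
  show ((A * B : FreeSemigroup (Fin 2)) : (conGen rel).Quotient)
      = ((A * A : FreeSemigroup (Fin 2)) : (conGen rel).Quotient)
  rw [Con.eq]
  exact ConGen.Rel.of _ _ (Or.inl ⟨rfl, rfl⟩)

theorem hba : b' * a' = b' * b' := by
  show ((B * A : FreeSemigroup (Fin 2)) : (conGen rel).Quotient)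
      = ((B * B : FreeSemigroup (Fin 2)) : (conGen rel).Quotient)
  rw [Con.eq]
  exact ConGen.Rel.of _ _ (Or.inr ⟨rfl, rfl⟩)

theorem mem_union (x : Sem) : x ∈ genSet a' ∪ genSet b' := by
  induction x using Con.induction_on with
  | H w =>
    induction w using FreeSemigroup.recOnMul with
    | ih1 i =>
      fin_cases i
      · exact Or.inl ⟨1, le_refl 1, rfl⟩
      · exact Or.inr ⟨1, le_refl 1, rfl⟩
    | ih2 u v hu hv =>
      rw [show ((FreeSemigroup.of u * v : FreeSemigroup (Fin 2)) : (conGen rel).Quotient)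
          = (FreeSemigroup.of u : (conGen rel).Quotient) * (v : (conGen rel).Quotient)
          from rfl]
      rcases hu with ⟨m, hm, hmu⟩ | ⟨m, hm, hmu⟩ <;>
        rcases hv with ⟨n, hn, hnv⟩ | ⟨n, hn, hnv⟩
      · exact Or.inl ⟨m + n, by omega, by rw [← hmu, ← hnv]; exact (pw_add_s8 a' m n hm hn).symm⟩
      · exact Or.inl ⟨m + n, by omega,
          by rw [← hmu, ← hnv]; exact (pw_mul_pw_other a' b' hab m n hm hn).symm⟩
      · exact Or.inr ⟨m + n, by omega,
          by rw [← hmu, ← hnv]; exact (pw_mul_pw_other b' a' hba m n hm hn).symm⟩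
      · exact Or.inr ⟨m + n, by omega, by rw [← hmu, ← hnv]; exact (pw_add_s8 b' m n hm hn).symm⟩

/-- The semigroup `⟨a, b | ab = a², ba = b²⟩` is the disjoint union of the
free monogenic subsemigroups `⟨a⟩` and `⟨b⟩`. -/
theorem stmt_8 :
    InfOrder a' ∧ InfOrder b' ∧
      genSet a' ∩ genSet b' = ∅ ∧
      genSet a' ∪ genSet b' = Set.univ := by
  refine ⟨infOrder_of_len lenQ_a, infOrder_of_len lenQ_b, ?_, ?_⟩
  · ext x
    simp only [Set.mem_inter_iff, Set.mem_empty_iff_false, iff_false]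
    rintro ⟨⟨m, hm, hmx⟩, ⟨n, hn, hnx⟩⟩
    have h1 : hdQ x = (0 : Fin 2) := by
      rw [← hmx, map_pw a' hdQ m hm, hdQ_a]; exact pw_LZ _ m
    have h2 : hdQ x = (1 : Fin 2) := by
      rw [← hnx, map_pw b' hdQ n hn, hdQ_b]; exact pw_LZ _ n
    rw [h1] at h2
    have hne : (0 : Fin 2) ≠ 1 := by decide
    exact hne h2
  · exact Set.eq_univ_of_forall mem_union

end Stmt8
end
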